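/- For any s > 1/2, the Fourier transform maps L^∞(ℝ) into the Sobolev space H^{-s}(ℝ), and the operator norm of the Fourier transform from L^∞(ℝ) to H^{-s}(ℝ) equals C_s = (2π ∫_ℝ (1+τ²)^{-s} dτ)^{1/2}. -/

import Mathlib

/-!
STATEMENT 0: For s > 1/2, the Fourier transform maps L^∞(ℝ) into H^{-s}(ℝ), and
its operator norm from L^∞ to H^{-s} equals C_s = (2π ∫ (1+τ²)^{-s} dτ)^{1/2}.

Since the H^{-s} norm is defined by ‖g‖_{H^{-s}}² = 2π ∫ (1+τ²)^{-s} |(F⁻¹g)(τ)|² dτ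
and F⁻¹(F f) = f, the H^{-s} norm of the Fourier transform of f ∈ L^∞ is exactly
(2π ∫ (1+τ²)^{-s} ‖f(τ)‖² dτ)^{1/2}; the equality of operator norms is expressed as
the inequality for every f together with its attainment by some nonzero f.
-/

open MeasureTheory Real

/-- `H^{-s}` norm of the Fourier transform of `f`, via its time-side representative. -/
noncomputable def fourierHNegNorm (s : ℝ) (f : ℝ → ℂ) : ℝ :=
  Real.sqrt (2 * π * ∫ τ : ℝ, (1 + τ ^ 2) ^ (-s) * ‖f τ‖ ^ 2)

/-- The constant `C_s`. -/
noncomputable def Cs (s : ℝ) : ℝ :=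
  Real.sqrt (2 * π * ∫ τ : ℝ, (1 + τ ^ 2) ^ (-s))

lemma wt_int (s : ℝ) (hs : 1 / 2 < s) :
    Integrable (fun τ : ℝ => (1 + τ ^ 2) ^ (-s)) := by
  have h : ((Module.finrank ℝ ℝ : ℝ)) < 2 * s := by
    simp [Module.finrank_self]; linarith
  have := integrable_rpow_neg_one_add_norm_sq (E := ℝ) (μ := volume) h
  simpa [Real.norm_eq_abs, sq_abs, neg_div, mul_div_assoc] using this

theorem stmt0 (s : ℝ) (hs : 1 / 2 < s) :
    (∀ f : ℝ → ℂ, MemLp f ⊤ volume →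
      fourierHNegNorm s f ≤ Cs s * (eLpNorm f ⊤ volume).toReal) ∧
    (∃ f : ℝ → ℂ, MemLp f ⊤ volume ∧ eLpNorm f ⊤ volume ≠ 0 ∧
      fourierHNegNorm s f = Cs s * (eLpNorm f ⊤ volume).toReal) := by
  have hI := wt_int s hs
  have hInn : 0 ≤ ∫ τ : ℝ, (1 + τ ^ 2) ^ (-s) :=
    integral_nonneg fun τ => Real.rpow_nonneg (by positivity) _
  constructor
  · intro f hf
    set M : ℝ := (eLpNorm f ⊤ volume).toReal with hM
    have hM0 : 0 ≤ M := ENNReal.toReal_nonneg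
    have hae : ∀ᵐ τ : ℝ, ‖f τ‖ ≤ M := by
      have hfin : eLpNormEssSup f volume ≠ ⊤ := by
        rw [← eLpNorm_exponent_top]; exact hf.2.ne
      filter_upwards [enorm_ae_le_eLpNormEssSup f volume] with τ hτ
      have h2 := ENNReal.toReal_mono hfin hτ
      simpa [hM, eLpNorm_exponent_top] using h2
    have hint : ∫ τ : ℝ, (1 + τ ^ 2) ^ (-s) * ‖f τ‖ ^ 2
        ≤ ∫ τ : ℝ, (1 + τ ^ 2) ^ (-s) * M ^ 2 := by
      apply integral_mono_of_nonneg
      · filter_upwards with τ; positivity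
      · exact hI.mul_const _
      · filter_upwards [hae] with τ hτ
        exact mul_le_mul_of_nonneg_left
          (pow_le_pow_left₀ (norm_nonneg _) hτ 2) (Real.rpow_nonneg (by positivity) _)
    rw [fourierHNegNorm, Cs]
    calc Real.sqrt (2 * π * ∫ τ : ℝ, (1 + τ ^ 2) ^ (-s) * ‖f τ‖ ^ 2)
        ≤ Real.sqrt (2 * π * ((∫ τ : ℝ, (1 + τ ^ 2) ^ (-s)) * M ^ 2)) := by
          apply Real.sqrt_le_sqrt
          rw [← integral_mul_const] at *
          exact mul_le_mul_of_nonneg_left hint (by positivity)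
      _ = Real.sqrt (2 * π * ∫ τ : ℝ, (1 + τ ^ 2) ^ (-s)) * M := by
          rw [show 2 * π * ((∫ τ : ℝ, (1 + τ ^ 2) ^ (-s)) * M ^ 2)
              = (2 * π * ∫ τ : ℝ, (1 + τ ^ 2) ^ (-s)) * M ^ 2 by ring,
            Real.sqrt_mul (by positivity), Real.sqrt_sq hM0]
  · refine ⟨fun _ => 1, ?_, ?_, ?_⟩
    · exact memLp_top_const 1
    · rw [eLpNorm_const _ (by simp) (by simp [NeZero.ne])]
      simp
    · rw [eLpNorm_const _ (by simp) (by simp [NeZero.ne])]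
      simp [fourierHNegNorm, Cs]
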